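/- Let a, T, A > 0, X ≥ 0, β > 1, and let c > 0 be given. Then there exist constants M > 0 and c' > 0, depending only on β and c, such that ∫_0^a σ^{-β} exp(-c T²/σ) exp(-c A²/σ) exp(-c σ X²) dσ ≤ M · (T²+A²)^{-(β-1)} · exp(-c' A T / a) · exp(-c' T X). -/

import Mathlib

open Real MeasureTheory Set

lemma aux_integrable {β μ : ℝ} (hβ : 1 < β) (hμ : 0 < μ) :
    IntegrableOn (fun y : ℝ => y ^ (β - 2) * Real.exp (-(μ * y))) (Ioi 0) := by
  have := integrableOn_rpow_mul_exp_neg_mul_rpow (p := 1) (s := β - 2) (b := μ)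
    (by linarith) one_pos hμ
  refine this.congr_fun (fun x hx => ?_) measurableSet_Ioi
  simp only [Real.rpow_one]; ring_nf

lemma aux_int {β μ : ℝ} (hβ : 1 < β) (hμ : 0 < μ) :
    IntegrableOn (fun x : ℝ => x ^ (-β) * Real.exp (-(μ / x))) (Ioi 0) ∧
    ∫ x in Ioi (0:ℝ), x ^ (-β) * Real.exp (-(μ / x)) = (1/μ) ^ (β - 1) * Real.Gamma (β - 1) := by
  have heq : ∀ x ∈ Ioi (0:ℝ), (|(-1:ℝ)| * x ^ ((-1:ℝ) - 1)) •
      ((x ^ ((-1:ℝ))) ^ (β - 2) * Real.exp (-(μ * x ^ ((-1:ℝ)))))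
      = x ^ (-β) * Real.exp (-(μ / x)) := by
    intro x hx
    have hx' : (0:ℝ) < x := hx
    have h1 : x ^ ((-1:ℝ)) = x⁻¹ := Real.rpow_neg_one x
    have h2 : (x⁻¹) ^ (β - 2) = x ^ (-(β-2)) := by
      rw [← Real.rpow_neg_one x, ← Real.rpow_mul hx'.le]; ring_nf
    have h3 : x ^ ((-1:ℝ) - 1) = x ^ (-2 : ℝ) := by norm_num
    rw [abs_neg, abs_one, one_mul, smul_eq_mul, h1, h2, h3, ← mul_assoc,
      ← Real.rpow_add hx', show (-2 : ℝ) + -(β - 2) = -β by ring, div_eq_mul_inv]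
  have hsub := integral_comp_rpow_Ioi (fun y : ℝ => y ^ (β - 2) * Real.exp (-(μ * y)))
    (p := -1) (by norm_num)
  have hval := Real.integral_rpow_mul_exp_neg_mul_Ioi (a := β - 1) (r := μ) (by linarith) hμ
  rw [show β - 1 - 1 = β - 2 by ring] at hval
  constructor
  · have := (integrableOn_Ioi_comp_rpow_iff
      (fun y : ℝ => y ^ (β - 2) * Real.exp (-(μ * y))) (p := -1) (by norm_num)).2
      (aux_integrable hβ hμ)
    exact this.congr_fun heq measurableSet_Ioi
  · calc ∫ x in Ioi (0:ℝ), x ^ (-β) * Real.exp (-(μ / x))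
        = ∫ x in Ioi (0:ℝ), (|(-1:ℝ)| * x ^ ((-1:ℝ) - 1)) •
            ((x ^ ((-1:ℝ))) ^ (β - 2) * Real.exp (-(μ * x ^ ((-1:ℝ))))) :=
          (setIntegral_congr_fun measurableSet_Ioi heq).symm
      _ = ∫ y in Ioi (0:ℝ), y ^ (β - 2) * Real.exp (-(μ * y)) := hsub
      _ = (1/μ) ^ (β - 1) * Real.Gamma (β - 1) := hval

theorem stmt_2 (β c : ℝ) (hβ : 1 < β) (hc : 0 < c) :
    ∃ M > 0, ∃ c' > 0, ∀ a T A X : ℝ, 0 < a → 0 < T → 0 < A → 0 ≤ X →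
      ∫ σ in Set.Ioo (0 : ℝ) a,
          σ ^ (-β) * Real.exp (-c * T ^ 2 / σ) * Real.exp (-c * A ^ 2 / σ)
            * Real.exp (-c * σ * X ^ 2)
        ≤ M * (T ^ 2 + A ^ 2) ^ (-(β - 1)) * Real.exp (-c' * A * T / a)
            * Real.exp (-c' * T * X) := by
  have hΓ : 0 < Real.Gamma (β - 1) := Real.Gamma_pos_of_pos (by linarith)
  refine ⟨(2/c) ^ (β-1) * Real.Gamma (β-1), by positivity, c/2, by positivity, ?_⟩
  intro a T A X ha hT hA hX
  set μ := c/2 * (T^2 + A^2) with hμdef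
  have hμ : 0 < μ := by positivity
  obtain ⟨hgint, hgval⟩ := aux_int hβ hμ
  set K := Real.exp (-(c/2) * A * T / a) * Real.exp (-(c/2) * T * X) with hK
  have hK0 : 0 ≤ K := by positivity
  have hpt : ∀ σ ∈ Ioo (0:ℝ) a,
      σ ^ (-β) * Real.exp (-c * T ^ 2 / σ) * Real.exp (-c * A ^ 2 / σ)
        * Real.exp (-c * σ * X ^ 2)
      ≤ (σ ^ (-β) * Real.exp (-(μ / σ))) * K := by
    rintro σ ⟨hσ, hσa⟩
    have hexp : -c * T ^ 2 / σ + -c * A ^ 2 / σ + -c * σ * X ^ 2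
        ≤ -(μ / σ) + (-(c/2) * A * T / a + -(c/2) * T * X) := by
      have k1 : (c/2)*A*T/a ≤ (c/4)*(T^2+A^2)/σ := by
        have h' : (c/2)*A*T ≤ (c/4)*(T^2+A^2) := by nlinarith [sq_nonneg (T-A)]
        exact div_le_div₀ (by positivity) h' hσ hσa.le
      have k2 : (c/2)*T*X ≤ (c/4)*T^2/σ + c*σ*X^2 := by
        have e : c/(4*σ) * (T - 2*σ*X)^2 = (c/4)*T^2/σ - c*T*X + c*σ*X^2 := by
          field_simp; ring
        have h0 := mul_nonneg (by positivity : (0:ℝ) ≤ c/(4*σ)) (sq_nonneg (T - 2*σ*X))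
        rw [e] at h0
        nlinarith [mul_nonneg (mul_nonneg hc.le hT.le) hX]
      have k3 : -c * T ^ 2 / σ + -c * A ^ 2 / σ
          = -(μ/σ) - (c/4)*(T^2+A^2)/σ - (c/4)*T^2/σ - (c/4)*A^2/σ := by
        rw [hμdef]; field_simp; ring
      have k4 : 0 ≤ (c/4)*A^2/σ := by positivity
      rw [k3]; ring_nf at k1 k2 k4 ⊢; linarith
    have hσβ : (0:ℝ) ≤ σ ^ (-β) := Real.rpow_nonneg hσ.le _
    calc σ ^ (-β) * Real.exp (-c * T ^ 2 / σ) * Real.exp (-c * A ^ 2 / σ)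
          * Real.exp (-c * σ * X ^ 2)
        = σ ^ (-β) * Real.exp (-c * T ^ 2 / σ + -c * A ^ 2 / σ + -c * σ * X ^ 2) := by
          rw [Real.exp_add, Real.exp_add]; ring
      _ ≤ σ ^ (-β) * Real.exp (-(μ / σ) + (-(c/2) * A * T / a + -(c/2) * T * X)) := by
          exact mul_le_mul_of_nonneg_left (Real.exp_le_exp.2 hexp) hσβ
      _ = (σ ^ (-β) * Real.exp (-(μ / σ))) * K := by
          rw [hK, Real.exp_add, Real.exp_add]; ring
  have hgintK : IntegrableOn (fun σ : ℝ => σ ^ (-β) * Real.exp (-(μ / σ)) * K) (Ioo 0 a) :=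
    (hgint.mono_set Ioo_subset_Ioi_self).mul_const K
  have hmeas : AEStronglyMeasurable
      (fun σ : ℝ => σ ^ (-β) * Real.exp (-c * T ^ 2 / σ) * Real.exp (-c * A ^ 2 / σ)
        * Real.exp (-c * σ * X ^ 2)) (volume.restrict (Ioo (0:ℝ) a)) := by
    apply Measurable.aestronglyMeasurable
    fun_prop
  have hint_lhs : IntegrableOn
      (fun σ : ℝ => σ ^ (-β) * Real.exp (-c * T ^ 2 / σ) * Real.exp (-c * A ^ 2 / σ)
        * Real.exp (-c * σ * X ^ 2)) (Ioo 0 a) := by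
    refine hgintK.mono' hmeas ?_
    refine (ae_restrict_iff' measurableSet_Ioo).2 (ae_of_all _ fun σ hσ => ?_)
    rw [Real.norm_eq_abs, abs_of_nonneg (mul_nonneg (mul_nonneg (mul_nonneg
      (Real.rpow_nonneg hσ.1.le _) (Real.exp_nonneg _)) (Real.exp_nonneg _)) (Real.exp_nonneg _))]
    exact hpt σ hσ
  calc ∫ σ in Ioo (0:ℝ) a, σ ^ (-β) * Real.exp (-c * T ^ 2 / σ) * Real.exp (-c * A ^ 2 / σ)
        * Real.exp (-c * σ * X ^ 2)
      ≤ ∫ σ in Ioo (0:ℝ) a, σ ^ (-β) * Real.exp (-(μ / σ)) * K :=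
        setIntegral_mono_on hint_lhs hgintK measurableSet_Ioo hpt
    _ = (∫ σ in Ioo (0:ℝ) a, σ ^ (-β) * Real.exp (-(μ / σ))) * K := integral_mul_const _ _
    _ ≤ (∫ σ in Ioi (0:ℝ), σ ^ (-β) * Real.exp (-(μ / σ))) * K := by
        refine mul_le_mul_of_nonneg_right ?_ hK0
        refine setIntegral_mono_set hgint ?_ (HasSubset.Subset.eventuallyLE Ioo_subset_Ioi_self)
        refine (ae_restrict_iff' measurableSet_Ioi).2 (ae_of_all _ fun σ hσ => ?_)
        have : (0:ℝ) < σ := hσ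
        positivity
    _ = ((1/μ) ^ (β-1) * Real.Gamma (β-1)) * K := by rw [hgval]
    _ = (2/c) ^ (β-1) * Real.Gamma (β-1) * (T ^ 2 + A ^ 2) ^ (-(β - 1))
          * Real.exp (-(c/2) * A * T / a) * Real.exp (-(c/2) * T * X) := by
        have h1 : (1:ℝ)/μ = (2/c) * (T^2+A^2)⁻¹ := by
          rw [hμdef]; field_simp
        have hTA : (0:ℝ) ≤ T^2+A^2 := by positivity
        have h2 : ((1:ℝ)/μ) ^ (β-1) = (2/c) ^ (β-1) * (T^2+A^2) ^ (-(β-1)) := by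
          rw [h1, Real.mul_rpow (by positivity) (by positivity),
            Real.inv_rpow hTA, ← Real.rpow_neg hTA]
        rw [h2, hK]; ring
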